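/- Let k₀ ≥ 0. There exists a constant C > 0, depending only on k₀, such that for every α > 0, every μ ∈ (0,1], every j ∈ {0, 1}, and every measurable function u : ℝ → ℂ, one has ( ∫ |k|^j·|u(k)| dk )² ≤ C·μ^{α}·∫ (1 + μ^{−4α}(|k| − k₀)⁴)·|u(k)|² dk. -/

import Mathlib

open MeasureTheory Real

/-- The basic Cauchy integral: `∫ (1 + (ε⁻¹(k-a))²)⁻¹ dk = ε π`. -/
lemma stmt19_aux (ε a : ℝ) (hε : 0 < ε) :
    (∫⁻ k : ℝ, ENNReal.ofReal ((1 + (ε⁻¹ * (k - a)) ^ 2)⁻¹)) = ENNReal.ofReal (ε * π) := by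
  have hint : Integrable (fun x : ℝ => (1 + (x - ε⁻¹ * a) ^ 2)⁻¹) :=
    integrable_inv_one_add_sq.comp_sub_right (ε⁻¹ * a)
  have hint2 : Integrable (fun k : ℝ => (1 + (ε⁻¹ * (k - a)) ^ 2)⁻¹) := by
    have h := hint.comp_mul_left' (R := ε⁻¹) (inv_ne_zero hε.ne')
    have : (fun x : ℝ => (1 + (ε⁻¹ * x - ε⁻¹ * a) ^ 2)⁻¹)
        = fun k : ℝ => (1 + (ε⁻¹ * (k - a)) ^ 2)⁻¹ := by
      funext x; ring_nf
    simpa [this] using h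
  rw [← ofReal_integral_eq_lintegral_ofReal hint2
      (Filter.Eventually.of_forall fun x => by positivity)]
  congr 1
  have h1 : (∫ k : ℝ, (1 + (ε⁻¹ * (k - a)) ^ 2)⁻¹)
      = ∫ k : ℝ, (fun x : ℝ => (1 + (x - ε⁻¹ * a) ^ 2)⁻¹) (ε⁻¹ * k) := by
    congr 1; funext k; ring_nf
  rw [h1, Measure.integral_comp_inv_mul_left (fun x : ℝ => (1 + (x - ε⁻¹ * a) ^ 2)⁻¹) ε,
    integral_sub_right_eq_self (fun x : ℝ => (1 + x ^ 2)⁻¹) (ε⁻¹ * a),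
    integral_univ_inv_one_add_sq, abs_of_pos hε, smul_eq_mul]

theorem stmt19 (k₀ : ℝ) (hk₀ : 0 ≤ k₀) :
    ∃ C : ℝ, 0 < C ∧
      ∀ α μ : ℝ, 0 < α → 0 < μ → μ ≤ 1 →
      ∀ j : ℕ, j ≤ 1 →
      ∀ u : ℝ → ℂ, Measurable u →
        (∫⁻ k : ℝ, ENNReal.ofReal (|k| ^ j * ‖u k‖)) ^ 2 ≤
          ENNReal.ofReal (C * μ ^ α) *
            ∫⁻ k : ℝ, ENNReal.ofReal ((1 + μ ^ (-(4 * α)) * (|k| - k₀) ^ 4) * ‖u k‖ ^ 2) := by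
  refine ⟨16 * (3 + 2 * k₀ ^ 2), by positivity, ?_⟩
  intro α μ hα hμ0 hμ1 j hj u hu
  set c : ℝ := 2 * (3 + 2 * k₀ ^ 2) with hc
  have hc0 : (0:ℝ) < c := by positivity
  set ε : ℝ := μ ^ α with hεdef
  have hε0 : 0 < ε := Real.rpow_pos_of_pos hμ0 α
  have hε1 : ε ≤ 1 := Real.rpow_le_one hμ0.le hμ1 hα.le
  have hb : 1 ≤ ε⁻¹ := (one_le_inv_iff₀).2 ⟨hε0, hε1⟩
  have hμ4 : μ ^ (-(4 * α)) = (ε ^ 4)⁻¹ := by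
    rw [hεdef, ← Real.rpow_natCast (μ ^ α) 4, ← Real.rpow_mul hμ0.le, ← Real.rpow_neg hμ0.le]
    norm_num [mul_comm]
  set w : ℝ → ℝ := fun k => 1 + (ε ^ 4)⁻¹ * (|k| - k₀) ^ 4 with hw
  have hw0 : ∀ k, 0 < w k := fun k => by positivity
  have hwcont : Continuous w := by
    apply Continuous.add continuous_const
    exact continuous_const.mul (((continuous_abs).sub continuous_const).pow 4)
  -- Cauchy-Schwarz setup
  set f : ℝ → ENNReal := fun k => ENNReal.ofReal (|k| ^ j / Real.sqrt (w k)) with hf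
  set g : ℝ → ENNReal := fun k => ENNReal.ofReal (Real.sqrt (w k) * ‖u k‖) with hg
  have hfmeas : AEMeasurable f := by
    refine Measurable.aemeasurable (Measurable.ennreal_ofReal ?_)
    exact (((continuous_abs.pow j).div hwcont.sqrt
      (fun k => (Real.sqrt_pos.2 (hw0 k)).ne')).measurable)
  have hgmeas : AEMeasurable g := by
    refine Measurable.aemeasurable (Measurable.ennreal_ofReal ?_)
    exact hwcont.sqrt.measurable.mul hu.norm
  have hsplit : ∀ k, ENNReal.ofReal (|k| ^ j * ‖u k‖) = f k * g k := by
    intro k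
    rw [hf, hg, ← ENNReal.ofReal_mul (by positivity)]
    congr 1
    have hs : Real.sqrt (w k) ≠ 0 := (Real.sqrt_pos.2 (hw0 k)).ne'
    field_simp
  -- Cauchy-Schwarz
  have hrw2 : ∀ x : ENNReal, x ^ (2:ℝ) = x ^ (2:ℕ) := fun x => by
    rw [← ENNReal.rpow_natCast]; norm_num
  have hCS : (∫⁻ k, f k * g k) ^ 2 ≤ (∫⁻ k, f k ^ 2) * (∫⁻ k, g k ^ 2) := by
    have h22 : Real.HolderConjugate 2 2 := Real.HolderConjugate.two_two
    have h := ENNReal.lintegral_mul_le_Lp_mul_Lq volume h22 hfmeas hgmeas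
    have h' : (∫⁻ k, f k * g k) ^ 2
        ≤ ((∫⁻ k, f k ^ (2:ℝ)) ^ (1/(2:ℝ)) * (∫⁻ k, g k ^ (2:ℝ)) ^ (1/(2:ℝ))) ^ 2 :=
      pow_le_pow_left₀ (zero_le) h 2
    refine h'.trans_eq ?_
    rw [mul_pow]
    have hAB : ∀ A : ENNReal, (A ^ (1/(2:ℝ))) ^ (2:ℕ) = A := by
      intro A
      rw [← ENNReal.rpow_natCast (A ^ (1/(2:ℝ))) 2, ← ENNReal.rpow_mul]
      norm_num
    rw [hAB, hAB]
    simp_rw [hrw2]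
  -- pointwise bound on f^2
  have keylem : ∀ t : ℝ, ((k₀ + t) ^ j) ^ 2 / (1 + (ε ^ 4)⁻¹ * t ^ 4)
      ≤ c * (1 + (ε⁻¹ * t) ^ 2)⁻¹ := by
    intro t
    have hb2 : (0:ℝ) ≤ ε⁻¹ ^ 2 - 1 := by nlinarith
    have hD : (0:ℝ) < 1 + (ε⁻¹ * t) ^ 2 := by positivity
    have hW : (0:ℝ) < 1 + (ε ^ 4)⁻¹ * t ^ 4 := by positivity
    rw [← div_eq_mul_inv c, div_le_div_iff₀ hW hD, ← inv_pow]
    interval_cases j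
    · nlinarith [sq_nonneg (ε⁻¹ ^ 2 * t ^ 2 - 1), sq_nonneg (ε⁻¹ * t), sq_nonneg k₀,
        mul_nonneg (sq_nonneg k₀) (sq_nonneg (ε⁻¹ ^ 2 * t ^ 2)),
        mul_nonneg (sq_nonneg k₀) (sq_nonneg (ε⁻¹ ^ 2 * t ^ 2 - 1)),
        sq_nonneg (ε⁻¹ ^ 2 * t ^ 2)]
    · nlinarith [sq_nonneg (k₀ - t), sq_nonneg (k₀ + t), sq_nonneg (ε⁻¹ ^ 2 * t ^ 2 - 1),
        mul_nonneg (sq_nonneg k₀) (sq_nonneg (ε⁻¹ ^ 2 * t ^ 2 - 1)),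
        mul_nonneg (sq_nonneg (k₀ - t)) (mul_nonneg (sq_nonneg ε⁻¹) (sq_nonneg t)),
        mul_nonneg hb2 (sq_nonneg t),
        mul_nonneg (mul_nonneg hb2 (sq_nonneg ε⁻¹)) (mul_nonneg (sq_nonneg t) (sq_nonneg t)),
        sq_nonneg (ε⁻¹ ^ 2 * t ^ 2), sq_nonneg k₀, sq_nonneg t]
  have hf2r : ∀ k, (|k| ^ j) ^ 2 / w k ≤ c * (1 + (ε⁻¹ * (k - k₀)) ^ 2)⁻¹
      + c * (1 + (ε⁻¹ * (k + k₀)) ^ 2)⁻¹ := by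
    intro k
    rcases le_total 0 k with h | h
    · have h1 := keylem (k - k₀)
      rw [show k₀ + (k - k₀) = k from by ring] at h1
      have e1 : (|k| ^ j) ^ 2 / w k = (k ^ j) ^ 2 / (1 + (ε ^ 4)⁻¹ * (k - k₀) ^ 4) := by
        simp only [hw, abs_of_nonneg h]
      rw [e1]
      exact le_trans h1 (le_add_of_nonneg_right (by positivity))
    · have h1 := keylem (-(k + k₀))
      rw [show k₀ + -(k + k₀) = -k from by ring] at h1
      have e1 : (|k| ^ j) ^ 2 / w k = ((-k) ^ j) ^ 2 / (1 + (ε ^ 4)⁻¹ * (-(k + k₀)) ^ 4) := by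
        simp only [hw, abs_of_nonpos h]
        ring_nf
      have e2 : c * (1 + (ε⁻¹ * -(k + k₀)) ^ 2)⁻¹ = c * (1 + (ε⁻¹ * (k + k₀)) ^ 2)⁻¹ := by
        rw [mul_neg, neg_sq]
      rw [e1, ← e2]
      exact le_trans h1 (le_add_of_nonneg_left (by positivity))
  have hf2 : ∀ k, f k ^ 2 ≤ ENNReal.ofReal (c * (1 + (ε⁻¹ * (k - k₀)) ^ 2)⁻¹)
      + ENNReal.ofReal (c * (1 + (ε⁻¹ * (k + k₀)) ^ 2)⁻¹) := by
    intro k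
    rw [hf, ← ENNReal.ofReal_pow (by positivity), div_pow, Real.sq_sqrt (hw0 k).le,
      ← ENNReal.ofReal_add (by positivity) (by positivity)]
    exact ENNReal.ofReal_le_ofReal (hf2r k)
  -- integral of the bound
  have hIf : (∫⁻ k, f k ^ 2) ≤ ENNReal.ofReal (16 * (3 + 2 * k₀ ^ 2) * ε) := by
    have hm1 : Measurable fun k : ℝ => ENNReal.ofReal (c * (1 + (ε⁻¹ * (k - k₀)) ^ 2)⁻¹) := by
      apply Measurable.ennreal_ofReal
      apply Continuous.measurable
      have hc1 : Continuous fun k : ℝ => 1 + (ε⁻¹ * (k - k₀)) ^ 2 :=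
        continuous_const.add ((continuous_const.mul
          (continuous_id.sub continuous_const)).pow 2)
      exact continuous_const.mul (hc1.inv₀ (fun k => by positivity))
    calc (∫⁻ k, f k ^ 2)
        ≤ ∫⁻ k, (ENNReal.ofReal (c * (1 + (ε⁻¹ * (k - k₀)) ^ 2)⁻¹)
            + ENNReal.ofReal (c * (1 + (ε⁻¹ * (k + k₀)) ^ 2)⁻¹)) := lintegral_mono hf2
      _ = (∫⁻ k, ENNReal.ofReal (c * (1 + (ε⁻¹ * (k - k₀)) ^ 2)⁻¹))
            + ∫⁻ k, ENNReal.ofReal (c * (1 + (ε⁻¹ * (k + k₀)) ^ 2)⁻¹) :=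
          lintegral_add_left hm1 _
      _ = (ENNReal.ofReal c * ∫⁻ k, ENNReal.ofReal ((1 + (ε⁻¹ * (k - k₀)) ^ 2)⁻¹))
            + ENNReal.ofReal c * ∫⁻ k, ENNReal.ofReal ((1 + (ε⁻¹ * (k + k₀)) ^ 2)⁻¹) := by
          simp_rw [ENNReal.ofReal_mul hc0.le]
          rw [lintegral_const_mul' _ _ ENNReal.ofReal_ne_top,
            lintegral_const_mul' _ _ ENNReal.ofReal_ne_top]
      _ = ENNReal.ofReal c * ENNReal.ofReal (ε * π)
            + ENNReal.ofReal c * ENNReal.ofReal (ε * π) := by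
          rw [stmt19_aux ε k₀ hε0]
          congr 2
          have : ∀ k : ℝ, k + k₀ = k - (-k₀) := fun k => by ring
          simp_rw [this]
          exact stmt19_aux ε (-k₀) hε0
      _ ≤ ENNReal.ofReal (16 * (3 + 2 * k₀ ^ 2) * ε) := by
          rw [← ENNReal.ofReal_mul hc0.le, ← ENNReal.ofReal_add (by positivity) (by positivity)]
          apply ENNReal.ofReal_le_ofReal
          have hπ : π ≤ 4 := (Real.pi_le_four)
          have hε0' := hε0.le
          rw [hc]
          nlinarith [Real.pi_pos, mul_nonneg hε0' (sub_nonneg.2 hπ), sq_nonneg k₀,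
            mul_nonneg (mul_nonneg (by positivity : (0:ℝ) ≤ 4 * (3 + 2*k₀^2)) hε0')
              (sub_nonneg.2 hπ)]
  -- g^2 identity
  have hg2 : ∀ k, g k ^ 2
      = ENNReal.ofReal ((1 + μ ^ (-(4 * α)) * (|k| - k₀) ^ 4) * ‖u k‖ ^ 2) := by
    intro k
    rw [hg, ← ENNReal.ofReal_pow (by positivity), mul_pow, Real.sq_sqrt (hw0 k).le, hμ4, hw]
  -- assemble
  calc (∫⁻ k : ℝ, ENNReal.ofReal (|k| ^ j * ‖u k‖)) ^ 2
      = (∫⁻ k, f k * g k) ^ 2 := by simp_rw [hsplit]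
    _ ≤ (∫⁻ k, f k ^ 2) * (∫⁻ k, g k ^ 2) := hCS
    _ ≤ ENNReal.ofReal (16 * (3 + 2 * k₀ ^ 2) * ε) * (∫⁻ k, g k ^ 2) :=
        mul_le_mul_left hIf _
    _ = ENNReal.ofReal (16 * (3 + 2 * k₀ ^ 2) * μ ^ α) *
          ∫⁻ k : ℝ, ENNReal.ofReal ((1 + μ ^ (-(4 * α)) * (|k| - k₀) ^ 4) * ‖u k‖ ^ 2) := by
        rw [hεdef]
        congr 1
        exact lintegral_congr fun k => hg2 k
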